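/- For every n ≥ 1 and every pair of neighboring points s < t of Dₙ (i.e. s, t ∈ Dₙ with t − s = 2^{−n}), one has 0 < A(t) − A(s) ≤ (3/4)^{n−1}; consequently A is Hölder continuous on [0,1/2] with exponent α = log₂(4/3). -/

import Mathlib

open MeasureTheory

noncomputable section

/-- The nonlinear mean `M[a,b] = (a+b)/√(4+(a-b)²)`. -/
def nlMean (a b : ℝ) : ℝ := (a + b) / Real.sqrt (4 + (a - b) ^ 2)

lemma nlMean_bounds (a b : ℝ) (ha : 0 ≤ a) (hb : b ≤ 1) (hd : 0 < b - a)
    (hd1 : b - a ≤ 1) :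
    (0 < nlMean a b - a ∧ nlMean a b - a ≤ 3/4 * (b - a)) ∧
    (0 < b - nlMean a b ∧ b - nlMean a b ≤ 3/4 * (b - a)) := by
  set d : ℝ := b - a with hdd
  set s : ℝ := Real.sqrt (4 + (a - b) ^ 2) with hs
  have h4 : (0:ℝ) ≤ 4 + (a - b) ^ 2 := by positivity
  have hs2 : s ^ 2 = 4 + d ^ 2 := by
    rw [hs, Real.sq_sqrt h4]; ring
  have hsge : 2 ≤ s := by
    rw [hs]
    have : (2:ℝ) = Real.sqrt 4 := by
      rw [show (4:ℝ) = 2^2 by norm_num, Real.sqrt_sq (by norm_num)]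
    rw [this]
    apply Real.sqrt_le_sqrt; nlinarith [sq_nonneg (a-b)]
  have hsle : s ≤ 2 + d ^ 2 / 4 := by
    rw [hs]
    have h2 : Real.sqrt ((2 + d^2/4)^2) = 2 + d^2/4 := Real.sqrt_sq (by positivity)
    rw [← h2]
    apply Real.sqrt_le_sqrt; nlinarith [sq_nonneg d, sq_nonneg (d^2)]
  have hspos : 0 < s := by linarith
  have ha1 : a ≤ 1 := by linarith
  have hb0 : 0 ≤ b := by linarith
  have hc1 : nlMean a b - a = (a + b - a * s) / s := by
    rw [nlMean, ← hs]; field_simp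
  have hc2 : b - nlMean a b = (b * s - a - b) / s := by
    rw [nlMean, ← hs]; field_simp; ring
  constructor
  · constructor
    · rw [hc1]
      apply div_pos _ hspos
      nlinarith
    · rw [hc1, div_le_iff₀ hspos]
      nlinarith
  · constructor
    · rw [hc2]
      apply div_pos _ hspos
      nlinarith
    · rw [hc2, div_le_iff₀ hspos]
      nlinarith

/-- chain / telescoping lemma at a fixed level -/
lemma chain_lemma (A : ℝ → ℝ) (n : ℕ)
    (hP : ∀ k : ℕ, k + 1 ≤ 2 ^ (n - 1) →
      0 < A (((k : ℝ) + 1) / 2 ^ n) - A ((k : ℝ) / 2 ^ n) ∧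
        A (((k : ℝ) + 1) / 2 ^ n) - A ((k : ℝ) / 2 ^ n) ≤ (3 / 4) ^ (n - 1)) :
    ∀ d k : ℕ, k + d ≤ 2 ^ (n - 1) →
      0 ≤ A (((k + d : ℕ) : ℝ) / 2 ^ n) - A ((k : ℝ) / 2 ^ n) ∧
        A (((k + d : ℕ) : ℝ) / 2 ^ n) - A ((k : ℝ) / 2 ^ n) ≤ d * (3 / 4) ^ (n - 1) := by
  intro d
  induction d with
  | zero => intro k hk; simp
  | succ d ih =>
    intro k hk
    have h1 := ih k (by omega)
    have h2 := hP (k + d) (by omega)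
    have e1 : (((k + d : ℕ) : ℝ)) = (k : ℝ) + d := by push_cast; ring
    have e2 : (((k + (d+1) : ℕ) : ℝ)) = ((k : ℝ) + d) + 1 := by push_cast; ring
    rw [e1] at h1
    rw [e1] at h2
    rw [e2]
    have hpow : (0:ℝ) ≤ (3/4) ^ (n-1) := by positivity
    constructor
    · linarith [h1.1, h2.1]
    · push_cast; nlinarith [h1.2, h2.2]

lemma inc_main (A : ℝ → ℝ) (hA0 : A 0 = 0) (hAhalf : A (1 / 2) = 1)
    (hArec : ∀ n : ℕ, 2 ≤ n → ∀ k : ℕ, Odd k → k < 2 ^ (n - 1) →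
      A ((k : ℝ) / 2 ^ n) =
        nlMean (A (((k : ℝ) - 1) / 2 ^ n)) (A (((k : ℝ) + 1) / 2 ^ n))) :
    ∀ n : ℕ, 1 ≤ n → ∀ k : ℕ, k + 1 ≤ 2 ^ (n - 1) →
      0 < A (((k : ℝ) + 1) / 2 ^ n) - A ((k : ℝ) / 2 ^ n) ∧
        A (((k : ℝ) + 1) / 2 ^ n) - A ((k : ℝ) / 2 ^ n) ≤ (3 / 4) ^ (n - 1) := by
  intro n hn1
  induction n, hn1 using Nat.le_induction with
  | base =>
    intro k hk
    have hk0 : k = 0 := by simpa using hk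
    subst hk0
    norm_num [hA0, hAhalf]
  | succ n hn ih =>
    have h2n : 2 ^ n = 2 ^ (n - 1) * 2 := by
      conv_lhs => rw [show n = (n - 1) + 1 by omega, pow_succ]
    have chain := chain_lemma A n ih
    have hval0 : ∀ q : ℕ, q ≤ 2 ^ (n - 1) → 0 ≤ A ((q : ℝ) / 2 ^ n) := by
      intro q hq
      have h := (chain q 0 (by omega)).1
      simpa [hA0] using h
    have h12 : ((2 ^ (n - 1) : ℕ) : ℝ) / 2 ^ n = 1 / 2 := by
      have hr : (2 : ℝ) ^ n = 2 ^ (n - 1) * 2 := by exact_mod_cast congrArg (Nat.cast (R := ℝ)) h2n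
      push_cast
      rw [hr, div_eq_div_iff (by positivity) (by norm_num)]
      ring
    have hval1 : ∀ q : ℕ, q ≤ 2 ^ (n - 1) → A ((q : ℝ) / 2 ^ n) ≤ 1 := by
      intro q hq
      have h := (chain (2 ^ (n - 1) - q) q (by omega)).1
      rw [show q + (2 ^ (n - 1) - q) = 2 ^ (n - 1) by omega, h12, hAhalf] at h
      linarith
    have hpow1 : (3 / 4 : ℝ) ^ (n - 1) ≤ 1 := by
      apply pow_le_one₀ <;> norm_num
    have hpowsucc : (3 / 4 : ℝ) ^ ((n + 1) - 1) = 3 / 4 * (3 / 4) ^ (n - 1) := by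
      rw [show (n + 1) - 1 = (n - 1) + 1 by omega, pow_succ]; ring
    intro k hk
    rw [Nat.add_sub_cancel] at hk
    rcases Nat.even_or_odd k with ⟨q, hq⟩ | ⟨q, hq⟩
    · -- k = 2q, increment = nlMean - a
      subst hq
      have hq1 : q + 1 ≤ 2 ^ (n - 1) := by omega
      have hlt : 2 * q + 1 < 2 ^ ((n + 1) - 1) := by
        simp only [Nat.add_sub_cancel]; omega
      have hrec := hArec (n + 1) (by omega) (2 * q + 1) ⟨q, by ring⟩ hlt
      have ea : (((2 * q + 1 : ℕ) : ℝ) - 1) / 2 ^ (n + 1) = (q : ℝ) / 2 ^ n := by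
        push_cast; rw [pow_succ]; ring
      have eb : (((2 * q + 1 : ℕ) : ℝ) + 1) / 2 ^ (n + 1) = ((q : ℝ) + 1) / 2 ^ n := by
        push_cast; rw [pow_succ]; ring
      rw [ea, eb] at hrec
      have egoal1 : ((q + q : ℕ) : ℝ) / 2 ^ (n + 1) = (q : ℝ) / 2 ^ n := by
        push_cast; rw [pow_succ]; ring
      have egoal2 : (((q + q : ℕ) : ℝ) + 1) / 2 ^ (n + 1) = ((2 * q + 1 : ℕ) : ℝ) / 2 ^ (n + 1) := by
        push_cast; ring
      rw [egoal1, egoal2, hrec]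
      have hb' : A (((q : ℝ) + 1) / 2 ^ n) ≤ 1 := by
        have := hval1 (q + 1) hq1
        push_cast at this
        exact this
      have hd := (ih q hq1).1
      have hd1 : A (((q : ℝ) + 1) / 2 ^ n) - A ((q : ℝ) / 2 ^ n) ≤ 1 :=
        le_trans (ih q hq1).2 hpow1
      have hB := (nlMean_bounds _ _ (hval0 q (by omega)) hb' hd hd1).1
      rw [hpowsucc]
      exact ⟨hB.1, le_trans hB.2 (by nlinarith [(ih q hq1).2])⟩
    · -- k = 2q+1, increment = b - nlMean
      subst hq
      have hq1 : q + 1 ≤ 2 ^ (n - 1) := by omega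
      have hlt : 2 * q + 1 < 2 ^ ((n + 1) - 1) := by
        simp only [Nat.add_sub_cancel]; omega
      have hrec := hArec (n + 1) (by omega) (2 * q + 1) ⟨q, by ring⟩ hlt
      have ea : (((2 * q + 1 : ℕ) : ℝ) - 1) / 2 ^ (n + 1) = (q : ℝ) / 2 ^ n := by
        push_cast; rw [pow_succ]; ring
      have eb : (((2 * q + 1 : ℕ) : ℝ) + 1) / 2 ^ (n + 1) = ((q : ℝ) + 1) / 2 ^ n := by
        push_cast; rw [pow_succ]; ring
      rw [ea, eb] at hrec
      have egoal2 : (((2 * q + 1 : ℕ) : ℝ) + 1) / 2 ^ (n + 1) = ((q : ℝ) + 1) / 2 ^ n := by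
        push_cast; rw [pow_succ]; ring
      rw [egoal2, hrec]
      have hb' : A (((q : ℝ) + 1) / 2 ^ n) ≤ 1 := by
        have := hval1 (q + 1) hq1
        push_cast at this
        exact this
      have hd := (ih q hq1).1
      have hd1 : A (((q : ℝ) + 1) / 2 ^ n) - A ((q : ℝ) / 2 ^ n) ≤ 1 :=
        le_trans (ih q hq1).2 hpow1
      have hB := (nlMean_bounds _ _ (hval0 q (by omega)) hb' hd hd1).2
      rw [hpowsucc]
      exact ⟨hB.1, le_trans hB.2 (by nlinarith [(ih q hq1).2])⟩

lemma grid_bound (A : ℝ → ℝ)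
    (hmain : ∀ n : ℕ, 1 ≤ n → ∀ k : ℕ, k + 1 ≤ 2 ^ (n - 1) →
      0 < A (((k : ℝ) + 1) / 2 ^ n) - A ((k : ℝ) / 2 ^ n) ∧
        A (((k : ℝ) + 1) / 2 ^ n) - A ((k : ℝ) / 2 ^ n) ≤ (3 / 4) ^ (n - 1))
    (n m : ℕ) (hn : 1 ≤ n) (hnm : n ≤ m) (j l : ℕ) (hjl : j ≤ l)
    (hl : l ≤ 2 ^ (m - 1)) (hle : l ≤ j + 2 ^ (m - n)) :
    0 ≤ A ((l : ℝ) / 2 ^ m) - A ((j : ℝ) / 2 ^ m) ∧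
      A ((l : ℝ) / 2 ^ m) - A ((j : ℝ) / 2 ^ m) ≤ 2 * (3 / 4) ^ (n - 1) := by
  have chain_m := chain_lemma A m (hmain m (le_trans hn hnm))
  have chain_n := chain_lemma A n (hmain n hn)
  set e : ℕ := 2 ^ (m - n) with he
  have hepos : 0 < e := Nat.pow_pos (by norm_num)
  have hme : 2 ^ (m - 1) = 2 ^ (n - 1) * e := by
    rw [he, ← pow_add]
    congr 1
    omega
  -- cast identity
  have hcast : ∀ a : ℕ, ((a * e : ℕ) : ℝ) / 2 ^ m = (a : ℝ) / 2 ^ n := by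
    intro a
    have hpm : (2 : ℝ) ^ m = 2 ^ n * 2 ^ (m - n) := by
      rw [← pow_add]; congr 1; omega
    push_cast [he]
    rw [hpm, div_eq_div_iff (by positivity) (by positivity)]
    ring
  set k : ℕ := j / e with hk
  have hk1 : k * e ≤ j := Nat.div_mul_le_self j e
  have hjk : j < (k + 1) * e := by
    have : j / e < k + 1 := by omega
    exact (Nat.div_lt_iff_lt_mul hepos).mp this |>.trans_le (by rw [mul_comm])
  set k₂ : ℕ := min (k + 2) (2 ^ (n - 1)) with hk2
  have hkb : k ≤ 2 ^ (n - 1) := by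
    have : k * e ≤ 2 ^ (n - 1) * e := le_trans hk1 (le_trans hjl (hl.trans_eq hme))
    exact Nat.le_of_mul_le_mul_right this hepos
  have hkk2 : k ≤ k₂ := le_min (by omega) hkb
  have hk2l : l ≤ k₂ * e := by
    have h1 : l ≤ (k + 2) * e := by nlinarith [hle, hjk]
    have h2 : l ≤ 2 ^ (n - 1) * e := hl.trans_eq hme
    rcases le_total (k + 2) (2 ^ (n - 1)) with h | h
    · rw [hk2, min_eq_left h]; exact h1
    · rw [hk2, min_eq_right h]; exact h2
  have hk2b : k₂ ≤ 2 ^ (n - 1) := min_le_right _ _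
  have hd2 : k₂ - k ≤ 2 := by omega
  have hAj : A ((k * e : ℕ) / 2 ^ m : ℝ) ≤ A ((j : ℝ) / 2 ^ m) := by
    have h := (chain_m (j - k * e) (k * e) (by
      have : k * e + (j - k * e) = j := by omega
      rw [this]; exact hjl.trans hl)).1
    rw [show k * e + (j - k * e) = j by omega] at h
    push_cast at h ⊢
    linarith
  have hAl : A ((l : ℝ) / 2 ^ m) ≤ A ((k₂ * e : ℕ) / 2 ^ m : ℝ) := by
    have h := (chain_m (k₂ * e - l) l (by
      have : l + (k₂ * e - l) = k₂ * e := by omega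
      rw [this]
      calc k₂ * e ≤ 2 ^ (n - 1) * e := Nat.mul_le_mul_right e hk2b
        _ = 2 ^ (m - 1) := hme.symm)).1
    rw [show l + (k₂ * e - l) = k₂ * e by omega] at h
    push_cast at h ⊢
    linarith
  have hAn : A ((k₂ : ℝ) / 2 ^ n) - A ((k : ℝ) / 2 ^ n) ≤ (k₂ - k : ℕ) * (3 / 4) ^ (n - 1) := by
    have h := (chain_n (k₂ - k) k (by omega)).2
    rw [show k + (k₂ - k) = k₂ by omega] at h
    exact h
  have hle2 : ((k₂ - k : ℕ) : ℝ) ≤ 2 := by exact_mod_cast hd2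
  have hp : (0:ℝ) ≤ (3/4) ^ (n-1) := by positivity
  have hmono : 0 ≤ A ((l : ℝ) / 2 ^ m) - A ((j : ℝ) / 2 ^ m) := by
    have h := (chain_m (l - j) j (by rw [show j + (l - j) = l by omega]; exact hl)).1
    rw [show j + (l - j) = l by omega] at h
    exact h
  refine ⟨hmono, ?_⟩
  have e1 := hcast k
  have e2 := hcast k₂
  rw [e1] at hAj
  rw [e2] at hAl
  nlinarith [hAn, hle2, hp, hAj, hAl]

lemma rpow_key (j : ℕ) : ((1:ℝ) / 2 ^ j) ^ Real.logb 2 (4/3) = (3/4 : ℝ) ^ j := by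
  have h1 : ((1:ℝ) / 2 ^ j) = (2 : ℝ) ^ (-(j:ℝ)) := by
    rw [Real.rpow_neg (by norm_num), Real.rpow_natCast]
    simp
  rw [h1, ← Real.rpow_mul (by norm_num : (0:ℝ) ≤ 2), mul_comm,
    Real.rpow_mul (by norm_num : (0:ℝ) ≤ 2),
    Real.rpow_logb (by norm_num) (by norm_num) (by norm_num),
    Real.rpow_neg (by norm_num), Real.rpow_natCast, ← inv_pow]
  norm_num

lemma dyadic_holder (A : ℝ → ℝ)
    (hmain : ∀ n : ℕ, 1 ≤ n → ∀ k : ℕ, k + 1 ≤ 2 ^ (n - 1) →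
      0 < A (((k : ℝ) + 1) / 2 ^ n) - A ((k : ℝ) / 2 ^ n) ∧
        A (((k : ℝ) + 1) / 2 ^ n) - A ((k : ℝ) / 2 ^ n) ≤ (3 / 4) ^ (n - 1))
    (m : ℕ) (hm : 1 ≤ m) (j l : ℕ) (hjl : j ≤ l) (hl : l ≤ 2 ^ (m - 1)) :
    |A ((l : ℝ) / 2 ^ m) - A ((j : ℝ) / 2 ^ m)| ≤
      32 / 9 * |(l : ℝ) / 2 ^ m - (j : ℝ) / 2 ^ m| ^ Real.logb 2 (4/3) := by
  have hα : 0 < Real.logb 2 (4/3) := Real.logb_pos (by norm_num) (by norm_num)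
  rcases eq_or_lt_of_le hjl with rfl | hjl'
  · simp [Real.zero_rpow hα.ne']
  set d : ℕ := l - j with hd
  have hd1 : 1 ≤ d := by omega
  set g : ℕ := Nat.log 2 d with hg
  have hg1 : 2 ^ g ≤ d := Nat.pow_log_le_self 2 (by omega)
  have hg2 : d < 2 ^ (g + 1) := Nat.lt_pow_succ_log_self (by norm_num) d
  have hgm : g ≤ m - 1 := by
    have : (2:ℕ) ^ g ≤ 2 ^ (m - 1) := le_trans hg1 (by omega)
    exact (Nat.pow_le_pow_iff_right (by norm_num)).mp this
  set n : ℕ := max 1 (m - g - 1) with hn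
  have hn1 : 1 ≤ n := le_max_left _ _
  have hnm : n ≤ m := by
    rw [hn]; omega
  have hdn : d ≤ 2 ^ (m - n) := by
    rcases lt_or_eq_of_le hgm with hlt | heq
    · have hne : n = m - g - 1 := by rw [hn]; omega
      have : m - n = g + 1 := by omega
      rw [this]; omega
    · have hne : n = 1 := by rw [hn]; omega
      have : m - n = m - 1 := by omega
      rw [this]; omega
  have hlow : 2 ^ (m - n - 1) ≤ d := by
    rcases lt_or_eq_of_le hgm with hlt | heq
    · have : m - n - 1 = g := by rw [hn]; omega
      rw [this]; exact hg1
    · have : m - n - 1 ≤ g := by rw [hn]; omega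
      exact le_trans (Nat.pow_le_pow_right (by norm_num) this) hg1
  obtain ⟨hnonneg, hub⟩ := grid_bound A hmain n m hn1 hnm j l hjl hl (by omega)
  have habs1 : |A ((l : ℝ) / 2 ^ m) - A ((j : ℝ) / 2 ^ m)| =
      A ((l : ℝ) / 2 ^ m) - A ((j : ℝ) / 2 ^ m) := abs_of_nonneg hnonneg
  have hdist : (1:ℝ) / 2 ^ (n + 1) ≤ (l : ℝ) / 2 ^ m - (j : ℝ) / 2 ^ m := by
    have h1 : ((2:ℝ) ^ (m - n - 1)) ≤ (d : ℝ) := by exact_mod_cast Nat.cast_le.mpr hlow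
    have h2 : (l : ℝ) / 2 ^ m - (j : ℝ) / 2 ^ m = (d : ℝ) / 2 ^ m := by
      rw [div_sub_div_same]
      congr 1
      rw [hd, Nat.cast_sub hjl]
    rw [h2, div_le_div_iff₀ (by positivity) (by positivity)]
    calc (1:ℝ) * 2 ^ m = 2 ^ m := by ring
      _ ≤ 2 ^ ((m - n - 1) + (n + 1)) := by
          apply pow_le_pow_right₀ (by norm_num)
          omega
      _ = 2 ^ (m - n - 1) * 2 ^ (n + 1) := by rw [pow_add]
      _ ≤ (d : ℝ) * 2 ^ (n + 1) := by
          apply mul_le_mul_of_nonneg_right h1 (by positivity)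
  have hdistpos : (0:ℝ) < (l : ℝ) / 2 ^ m - (j : ℝ) / 2 ^ m :=
    lt_of_lt_of_le (by positivity) hdist
  have habs2 : |(l : ℝ) / 2 ^ m - (j : ℝ) / 2 ^ m| = (l : ℝ) / 2 ^ m - (j : ℝ) / 2 ^ m :=
    abs_of_pos hdistpos
  rw [habs1, habs2]
  have hr : ((1:ℝ) / 2 ^ (n + 1)) ^ Real.logb 2 (4/3) ≤
      ((l : ℝ) / 2 ^ m - (j : ℝ) / 2 ^ m) ^ Real.logb 2 (4/3) :=
    Real.rpow_le_rpow (by positivity) hdist hα.le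
  rw [rpow_key (n + 1)] at hr
  have hkey : 2 * (3 / 4 : ℝ) ^ (n - 1) = 32 / 9 * (3/4 : ℝ) ^ (n + 1) := by
    rw [show n + 1 = (n - 1) + 2 by omega, pow_add]
    ring
  calc A ((l : ℝ) / 2 ^ m) - A ((j : ℝ) / 2 ^ m) ≤ 2 * (3 / 4) ^ (n - 1) := hub
    _ = 32 / 9 * (3/4 : ℝ) ^ (n + 1) := hkey
    _ ≤ 32 / 9 * ((l : ℝ) / 2 ^ m - (j : ℝ) / 2 ^ m) ^ Real.logb 2 (4/3) := by
        apply mul_le_mul_of_nonneg_left hr (by norm_num)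

theorem bridge_neighboring_increments_and_holder
    (A : ℝ → ℝ)
    (hAcont : ContinuousOn A (Set.Icc 0 (1 / 2)))
    (hA0 : A 0 = 0) (hAhalf : A (1 / 2) = 1)
    (hArec : ∀ n : ℕ, 2 ≤ n → ∀ k : ℕ, Odd k → k < 2 ^ (n - 1) →
      A ((k : ℝ) / 2 ^ n) =
        nlMean (A (((k : ℝ) - 1) / 2 ^ n)) (A (((k : ℝ) + 1) / 2 ^ n))) :
    (∀ n : ℕ, 1 ≤ n → ∀ k : ℕ, k + 1 ≤ 2 ^ (n - 1) →
        0 < A (((k : ℝ) + 1) / 2 ^ n) - A ((k : ℝ) / 2 ^ n) ∧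
          A (((k : ℝ) + 1) / 2 ^ n) - A ((k : ℝ) / 2 ^ n) ≤ (3 / 4) ^ (n - 1)) ∧
      ∃ C : ℝ, 0 < C ∧ ∀ s ∈ Set.Icc (0 : ℝ) (1 / 2), ∀ t ∈ Set.Icc (0 : ℝ) (1 / 2),
        |A s - A t| ≤ C * |s - t| ^ Real.logb 2 (4 / 3) := by
  have hmain := inc_main A hA0 hAhalf hArec
  refine ⟨hmain, 32 / 9, by norm_num, ?_⟩
  have hα : 0 < Real.logb 2 (4/3) := Real.logb_pos (by norm_num) (by norm_num)
  intro s hs t ht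
  set app : ℝ → ℕ → ℝ := fun u m => ((⌊u * 2 ^ m⌋₊ : ℕ) : ℝ) / 2 ^ m with happ
  have hfloor_le : ∀ u ∈ Set.Icc (0:ℝ) (1/2), ∀ m : ℕ, 1 ≤ m →
      ⌊u * 2 ^ m⌋₊ ≤ 2 ^ (m - 1) := by
    intro u hu m hm
    have h2 : (2:ℝ) ^ m = 2 ^ (m - 1) * 2 := by
      conv_lhs => rw [show m = (m - 1) + 1 by omega, pow_succ]
    have hle : u * 2 ^ m ≤ ((2 ^ (m - 1) : ℕ) : ℝ) := by
      push_cast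
      rw [h2]
      nlinarith [hu.1, hu.2, pow_pos (show (0:ℝ) < 2 by norm_num) (m-1)]
    calc ⌊u * 2 ^ m⌋₊ ≤ ⌊((2 ^ (m - 1) : ℕ) : ℝ)⌋₊ := Nat.floor_le_floor hle
      _ = 2 ^ (m - 1) := Nat.floor_natCast _
  have happrox : ∀ u ∈ Set.Icc (0:ℝ) (1/2), ∀ m : ℕ,
      u - (1/2) ^ m ≤ app u m ∧ app u m ≤ u := by
    intro u hu m
    have h0 : 0 ≤ u * 2 ^ m := by
      have := hu.1; positivity
    have hfl : (⌊u * 2 ^ m⌋₊ : ℝ) ≤ u * 2 ^ m := Nat.floor_le h0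
    have hfu : u * 2 ^ m < (⌊u * 2 ^ m⌋₊ : ℝ) + 1 := Nat.lt_floor_add_one _
    have hmul : (1/2:ℝ) ^ m * 2 ^ m = 1 := by
      rw [← mul_pow]; norm_num
    constructor
    · rw [happ]
      simp only
      rw [le_div_iff₀ (by positivity : (0:ℝ) < 2 ^ m)]
      nlinarith [hfu, hmul]
    · rw [happ]
      simp only
      rw [div_le_iff₀ (by positivity : (0:ℝ) < 2 ^ m)]
      exact hfl
  have hmem : ∀ u ∈ Set.Icc (0:ℝ) (1/2), ∀ m : ℕ, 1 ≤ m →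
      app u m ∈ Set.Icc (0:ℝ) (1/2) := by
    intro u hu m hm
    constructor
    · rw [happ]; positivity
    · rw [happ]
      simp only
      rw [div_le_iff₀ (by positivity : (0:ℝ) < 2 ^ m)]
      have h2 : (2:ℝ) ^ m = 2 ^ (m - 1) * 2 := by
        conv_lhs => rw [show m = (m - 1) + 1 by omega, pow_succ]
      have := hfloor_le u hu m hm
      have hcast : ((⌊u * 2 ^ m⌋₊ : ℕ) : ℝ) ≤ ((2 ^ (m-1) : ℕ) : ℝ) := by exact_mod_cast this
      push_cast at hcast
      linarith [hcast, h2]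
  have htends : ∀ u ∈ Set.Icc (0:ℝ) (1/2),
      Filter.Tendsto (app u) Filter.atTop (nhds u) := by
    intro u hu
    refine tendsto_of_tendsto_of_tendsto_of_le_of_le ?_
      (tendsto_const_nhds (x := u) (f := Filter.atTop (α := ℕ)))
      (fun m => (happrox u hu m).1) (fun m => (happrox u hu m).2)
    have hp : Filter.Tendsto (fun m : ℕ => (1/2:ℝ) ^ m) Filter.atTop (nhds 0) :=
      tendsto_pow_atTop_nhds_zero_of_lt_one (by norm_num) (by norm_num)
    have := Filter.Tendsto.sub (tendsto_const_nhds (x := u) (f := Filter.atTop (α := ℕ))) hp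
    simpa using this
  have hAtends : ∀ u ∈ Set.Icc (0:ℝ) (1/2),
      Filter.Tendsto (fun m => A (app u m)) Filter.atTop (nhds (A u)) := by
    intro u hu
    have h1 : Filter.Tendsto (app u) Filter.atTop (nhdsWithin u (Set.Icc 0 (1/2))) := by
      apply tendsto_nhdsWithin_of_tendsto_nhds_of_eventually_within _ (htends u hu)
      filter_upwards [Filter.eventually_ge_atTop 1] with m hm
      exact hmem u hu m hm
    exact (hAcont u hu).tendsto.comp h1
  -- pointwise dyadic inequality
  have hineq : ∀ m : ℕ, 1 ≤ m →
      |A (app s m) - A (app t m)| ≤ 32 / 9 * |app s m - app t m| ^ Real.logb 2 (4/3) := by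
    intro m hm
    rcases le_total (⌊s * 2 ^ m⌋₊) (⌊t * 2 ^ m⌋₊) with h | h
    · have := dyadic_holder A hmain m hm (⌊s * 2 ^ m⌋₊) (⌊t * 2 ^ m⌋₊) h
        (hfloor_le t ht m hm)
      rw [abs_sub_comm (A (app s m)), abs_sub_comm (app s m)]
      exact this
    · have := dyadic_holder A hmain m hm (⌊t * 2 ^ m⌋₊) (⌊s * 2 ^ m⌋₊) h
        (hfloor_le s hs m hm)
      exact this
  -- pass to the limit
  have hLHS : Filter.Tendsto (fun m => |A (app s m) - A (app t m)|) Filter.atTop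
      (nhds (|A s - A t|)) := ((hAtends s hs).sub (hAtends t ht)).abs
  have hbase : Filter.Tendsto (fun m => app s m - app t m) Filter.atTop (nhds (s - t)) :=
    (htends s hs).sub (htends t ht)
  have hcont : ContinuousAt (fun x : ℝ => x ^ Real.logb 2 (4/3)) |s - t| :=
    Real.continuousAt_rpow_const _ _ (Or.inr hα.le)
  have hRHS : Filter.Tendsto (fun m => 32 / 9 * |app s m - app t m| ^ Real.logb 2 (4/3))
      Filter.atTop (nhds (32 / 9 * |s - t| ^ Real.logb 2 (4/3))) := by
    apply Filter.Tendsto.const_mul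
    exact hcont.tendsto.comp hbase.abs
  refine le_of_tendsto_of_tendsto hLHS hRHS ?_
  filter_upwards [Filter.eventually_ge_atTop 1] with m hm
  exact hineq m hm
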